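/- Let δ > 0, β₀ > 0, β₁ < 0, and let ω > 0, τ > 0. Then Δ(iω, τ) = 0 if and only if sin(ωτ)/(ωτ) = (δ + β₀β₁)/(2β₀β₁) and (cos(ωτ) − 1)/(ωτ)² = 1/(2β₀β₁τ). -/

import Mathlib

/-- The characteristic function
`Δ(λ,τ) = λ + δ + β₀β₁ − (2β₀β₁/τ)∫_{−τ}^{0} e^{λ s} ds`, for `λ ∈ ℂ`. -/
noncomputable def charFn (δ β₀ β₁ τ : ℝ) (lam : ℂ) : ℂ :=
  lam + (δ : ℂ) + (β₀ : ℂ) * (β₁ : ℂ) -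
    ((2 * β₀ * β₁ / τ : ℝ) : ℂ) * ∫ s in (-τ)..(0 : ℝ), Complex.exp (lam * (s : ℂ))

/-- for `β₁ < 0`, `ω, τ > 0`, `Δ(iω, τ) = 0` iff
`sin(ωτ)/(ωτ) = (δ + β₀β₁)/(2β₀β₁)` and `(cos(ωτ) − 1)/(ωτ)² = 1/(2β₀β₁τ)`. -/
theorem charFn_imaginary_zero_iff
    (δ β₀ β₁ ω τ : ℝ) (hδ : 0 < δ) (hβ₀ : 0 < β₀) (hβ₁ : β₁ < 0)
    (hω : 0 < ω) (hτ : 0 < τ) :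
    charFn δ β₀ β₁ τ (Complex.I * (ω : ℂ)) = 0 ↔
      (Real.sin (ω * τ) / (ω * τ) = (δ + β₀ * β₁) / (2 * β₀ * β₁) ∧
        (Real.cos (ω * τ) - 1) / (ω * τ) ^ 2 = 1 / (2 * β₀ * β₁ * τ)) := by
  have hωτ : ω * τ ≠ 0 := by positivity
  have hβ : 2 * β₀ * β₁ ≠ 0 := by
    have : β₀ * β₁ < 0 := mul_neg_of_pos_of_neg hβ₀ hβ₁
    nlinarith
  have hc : (Complex.I * (ω : ℂ)) ≠ 0 := by
    simp [Complex.ext_iff, hω.ne']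
  have hint : (∫ s in (-τ)..(0:ℝ), Complex.exp ((Complex.I * (ω:ℂ)) * (s:ℂ))) =
      (1 - Complex.exp ((Complex.I * (ω:ℂ)) * (-τ:ℝ))) / (Complex.I * (ω:ℂ)) := by
    rw [integral_exp_mul_complex hc]
    simp
  have hE : Complex.exp ((Complex.I * (ω:ℂ)) * ((-τ:ℝ):ℂ)) =
      (Real.cos (ω * τ) : ℂ) - (Real.sin (ω * τ) : ℂ) * Complex.I := by
    rw [show (Complex.I * (ω:ℂ)) * ((-τ:ℝ):ℂ) = ((-(ω*τ) : ℝ) : ℂ) * Complex.I by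
      push_cast; ring, Complex.exp_mul_I]
    push_cast
    simp [Real.cos_neg, Real.sin_neg]
    ring
  rw [charFn, hint, hE]
  have hmul : ∀ z : ℂ, z = 0 ↔ (Complex.I * (ω:ℂ)) * (τ:ℂ) * z = 0 := by
    intro z
    constructor
    · intro h; rw [h, mul_zero]
    · intro h
      rcases mul_eq_zero.1 h with h' | h'
      · exact absurd h' (mul_ne_zero hc (by exact_mod_cast hτ.ne'))
      · exact h'
  rw [hmul]
  have expand : (Complex.I * (ω:ℂ)) * (τ:ℂ) *
      (Complex.I * (ω:ℂ) + (δ:ℂ) + (β₀:ℂ) * (β₁:ℂ) -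
        ((2 * β₀ * β₁ / τ : ℝ) : ℂ) *
          ((1 - ((Real.cos (ω * τ) : ℂ) - (Real.sin (ω * τ) : ℂ) * Complex.I)) /
            (Complex.I * (ω:ℂ)))) =
      ((-(ω^2*τ) - 2*β₀*β₁*(1 - Real.cos (ω*τ)) : ℝ) : ℂ) +
        ((ω*τ*(δ + β₀*β₁) - 2*β₀*β₁*Real.sin (ω*τ) : ℝ) : ℂ) * Complex.I := by
    have hτ' : (τ : ℂ) ≠ 0 := by exact_mod_cast hτ.ne'
    field_simp
    push_cast
    ring_nf
    have hω' : (ω : ℂ) ≠ 0 := by exact_mod_cast hω.ne'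
    rw [Complex.I_sq]
    field_simp
    ring
  rw [expand]
  rw [Complex.ext_iff]
  simp only [Complex.add_re, Complex.add_im, Complex.ofReal_re, Complex.ofReal_im,
    Complex.mul_re, Complex.mul_im, Complex.I_re, Complex.I_im, Complex.zero_re,
    Complex.zero_im, mul_one, mul_zero, sub_zero, zero_mul, add_zero, zero_add, one_mul]
  have hω0 : ω ≠ 0 := hω.ne'
  have hτ0 : τ ≠ 0 := hτ.ne'
  have hβ0 : β₀ ≠ 0 := hβ₀.ne'
  have hβ1 : β₁ ≠ 0 := hβ₁.ne
  constructor
  · rintro ⟨h1, h2⟩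
    refine ⟨?_, ?_⟩
    · field_simp
      nlinarith [h1, h2, mul_pos hω hτ]
    · field_simp
      nlinarith [h1, h2, mul_pos hω hτ]
  · rintro ⟨h1, h2⟩
    field_simp at h1 h2
    refine ⟨?_, ?_⟩ <;> nlinarith [h1, h2, mul_pos hω hτ]
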